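/- Let D be a Hamiltonian strongly connected balanced bipartite digraph of order 2a (a ≥ 3, k an integer with max{1,a/4} < k ≤ a/2) satisfying: for every dominating pair {u,v}, either d(u) ≥ 2a−k and d(v) ≥ a+k, or d(u) ≥ a+k and d(v) ≥ 2a−k. If D is not bipancyclic and not a directed cycle of length 2a, then every vertex u satisfies k+1 ≤ d⁻(u) ≤ a−1 and k+1 ≤ d⁺(u) ≤ a−1. -/
import Mathlib


open Finset Function

variable {V : Type*}

/-- Out-degree of a vertex in a digraph given by arc relation `A`. -/
noncomputable def outDeg (A : V → V → Prop) (u : V) : ℕ := {v | A u v}.ncard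

/-- In-degree of a vertex. -/
noncomputable def inDeg (A : V → V → Prop) (u : V) : ℕ := {v | A v u}.ncard

/-- Degree `d(u) = d⁺(u) + d⁻(u)`. -/
noncomputable def deg (A : V → V → Prop) (u : V) : ℕ := outDeg A u + inDeg A u

/-- Strong connectedness: a directed path between every ordered pair of vertices. -/
def StronglyConnected (A : V → V → Prop) : Prop :=
  ∀ u v : V, Relation.ReflTransGen A u v

/-- `X, Y` form a bipartition of the digraph `A`. -/
def IsBipartition (A : V → V → Prop) (X Y : Set V) : Prop :=
  Disjoint X Y ∧ X ∪ Y = Set.univ ∧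
    ∀ u v, A u v → (u ∈ X ∧ v ∈ Y) ∨ (u ∈ Y ∧ v ∈ X)

/-- `{u,v}` is a dominating pair: a common out-neighbour exists. -/
def IsDominatingPair (A : V → V → Prop) (u v : V) : Prop :=
  u ≠ v ∧ ∃ w, A u w ∧ A v w

/-- `{u,v}` is a dominated pair: a common in-neighbour exists. -/
def IsDominatedPair (A : V → V → Prop) (u v : V) : Prop :=
  u ≠ v ∧ ∃ w, A w u ∧ A w v

/-- The digraph contains a directed cycle of length `l`. -/
def HasCycleOfLength (A : V → V → Prop) (l : ℕ) : Prop :=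
  ∃ f : ZMod l → V, Function.Injective f ∧ ∀ i, A (f i) (f (i + 1))

/-- The digraph contains a Hamiltonian (directed) cycle. -/
def IsHamiltonian [Fintype V] (A : V → V → Prop) : Prop :=
  ∃ f : ZMod (Fintype.card V) ≃ V, ∀ i, A (f i) (f (i + 1))

/-- The digraph is exactly one directed cycle through all its vertices. -/
def IsDirectedCycleDigraph [Fintype V] (A : V → V → Prop) : Prop :=
  ∃ f : ZMod (Fintype.card V) ≃ V, ∀ u v, A u v ↔ ∃ i, u = f i ∧ v = f (i + 1)

/-- A balanced bipartite digraph of order `2a` is bipancyclic: it has cycles of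
all even lengths `2, 4, …, 2a`. -/
def Bipancyclic [Fintype V] (A : V → V → Prop) (a : ℕ) : Prop :=
  ∀ l, 1 ≤ l → l ≤ a → HasCycleOfLength A (2 * l)

/-- A digraph is pancyclic: cycles of all lengths `2, …, n`. -/
def Pancyclic [Fintype V] (A : V → V → Prop) : Prop :=
  ∀ l, 2 ≤ l → l ≤ Fintype.card V → HasCycleOfLength A l

/-- A cycle factor: a spanning collection of vertex-disjoint directed cycles,
i.e. a permutation `σ` with `v → σ v` an arc for every `v` (in a loopless
digraph all orbits have length `≥ 2`). -/
def HasCycleFactor (A : V → V → Prop) : Prop :=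
  ∃ σ : Equiv.Perm V, ∀ v, A v (σ v)

/-- `arcs(S,T) = |A[S,T]| + |A[T,S]|`. -/
noncomputable def arcsCount (A : V → V → Prop) (S T : Set V) : ℕ :=
  {p : V × V | p.1 ∈ S ∧ p.2 ∈ T ∧ A p.1 p.2}.ncard +
  {p : V × V | p.1 ∈ T ∧ p.2 ∈ S ∧ A p.1 p.2}.ncard

section AuxLemmas

variable {V : Type*}

lemma bip_symm {A : V → V → Prop} {X Y : Set V} (h : IsBipartition A X Y) :
    IsBipartition A Y X :=
  ⟨h.1.symm, by rw [Set.union_comm]; exact h.2.1, fun u v huv => (h.2.2 u v huv).symm⟩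

lemma parity_lemma [Fintype V] {A : V → V → Prop} {X Y : Set V}
    (hbip : IsBipartition A X Y)
    (f : ZMod (Fintype.card V) ≃ V) (hf : ∀ i, A (f i) (f (i + 1)))
    (i₀ : ZMod (Fintype.card V)) (hu : f i₀ ∈ X) :
    ∀ m : ℕ, (Even m → f (i₀ + m) ∈ X) ∧ (Odd m → f (i₀ + m) ∈ Y) := by
  intro m
  induction m with
  | zero =>
    refine ⟨fun _ => by simpa using hu, fun h => absurd h (by simp)⟩
  | succ n ih =>
    have harc := hf (i₀ + (n : ZMod (Fintype.card V)))
    have hcast : (i₀ + ((n + 1 : ℕ) : ZMod (Fintype.card V)))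
        = (i₀ + (n : ZMod (Fintype.card V))) + 1 := by push_cast; ring
    rw [hcast]
    rcases hbip.2.2 _ _ harc with ⟨h1, h2⟩ | ⟨h1, h2⟩
    · refine ⟨fun he => ?_, fun _ => h2⟩
      have ho : Odd n := by
        rw [Nat.even_iff] at he; rw [Nat.odd_iff]; omega
      exact absurd (ih.2 ho) (fun hY => Set.disjoint_left.mp hbip.1 h1 hY)
    · refine ⟨fun _ => h2, fun ho => ?_⟩
      have he : Even n := by
        rw [Nat.odd_iff] at ho; rw [Nat.even_iff]; omega
      exact absurd (ih.1 he) (fun hX => Set.disjoint_left.mp hbip.1 hX h1)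

lemma succ_val {n : ℕ} [NeZero n] (j : ZMod n) : (j + 1).val = (j.val + 1) % n := by
  have e : j + 1 = ((j.val + 1 : ℕ) : ZMod n) := by
    rw [Nat.cast_add, Nat.cast_one, ZMod.natCast_rightInverse j]
  rw [e, ZMod.val_natCast]

lemma full_out [Fintype V] {A : V → V → Prop} {X Y : Set V} {a : ℕ}
    (ha : 1 ≤ a) (hcard : Fintype.card V = 2 * a)
    (hbip : IsBipartition A X Y)
    (f : ZMod (Fintype.card V) ≃ V) (hf : ∀ i, A (f i) (f (i + 1)))
    {u : V} (hu : u ∈ X) (hfull : ∀ y ∈ Y, A u y) : Bipancyclic A a := by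
  haveI : NeZero (Fintype.card V) := ⟨by omega⟩
  set i₀ := f.symm u with hi₀
  have hui : f i₀ = u := f.apply_symm_apply u
  have par := parity_lemma hbip f hf i₀ (hui ▸ hu)
  intro l hl1 hl2
  haveI : NeZero (2 * l) := ⟨by omega⟩
  set c : ZMod (2 * l) → ℕ := fun j => if j.val = 0 then 0 else 2 * (a - l) + j.val with hc
  have hclt : ∀ j, c j < Fintype.card V := by
    intro j
    have := ZMod.val_lt j
    simp only [hc]
    split <;> omega
  refine ⟨fun j => f (i₀ + ((c j : ℕ) : ZMod (Fintype.card V))), ?_, ?_⟩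
  · intro j1 j2 h
    have h2 : ((c j1 : ℕ) : ZMod (Fintype.card V)) = ((c j2 : ℕ) : ZMod (Fintype.card V)) :=
      add_left_cancel (f.injective h)
    have h3 : c j1 = c j2 := by
      have := congrArg ZMod.val h2
      rwa [ZMod.val_cast_of_lt (hclt j1), ZMod.val_cast_of_lt (hclt j2)] at this
    have hv : j1.val = j2.val := by
      have hv1 := ZMod.val_lt j1
      have hv2 := ZMod.val_lt j2
      simp only [hc] at h3
      split_ifs at h3 <;> omega
    exact ZMod.val_injective _ hv
  · intro j
    show A (f (i₀ + ((c j : ℕ) : ZMod (Fintype.card V))))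
        (f (i₀ + ((c (j + 1) : ℕ) : ZMod (Fintype.card V))))
    have hjl : j.val < 2 * l := ZMod.val_lt j
    have hj1 := succ_val j
    rcases eq_or_ne j.val (2 * l - 1) with he | hne
    · have h0 : (j + 1).val = 0 := by
        rw [hj1, he, show 2 * l - 1 + 1 = 2 * l by omega, Nat.mod_self]
      have hcj : c j = 2 * a - 1 := by
        simp only [hc]; rw [if_neg (by omega)]; omega
      have hcj1 : c (j + 1) = 0 := by simp only [hc]; rw [if_pos h0]
      rw [hcj, hcj1]
      have hz : i₀ + ((0 : ℕ) : ZMod (Fintype.card V))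
          = (i₀ + ((2 * a - 1 : ℕ) : ZMod (Fintype.card V))) + 1 := by
        rw [add_assoc]
        congr 1
        have e1 : ((2 * a - 1 : ℕ) : ZMod (Fintype.card V)) + 1
            = ((2 * a - 1 + 1 : ℕ) : ZMod (Fintype.card V)) := by push_cast; ring
        rw [e1, show 2 * a - 1 + 1 = Fintype.card V by omega, ZMod.natCast_self]
        simp
      rw [hz]
      exact hf _
    · rcases eq_or_ne j.val 0 with h0 | h0
      · have hv1 : (j + 1).val = 1 := by
          rw [hj1, h0, Nat.mod_eq_of_lt (by omega)]
        have hcj : c j = 0 := by simp only [hc]; rw [if_pos h0]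
        have hcj1 : c (j + 1) = 2 * (a - l) + 1 := by
          simp only [hc]; rw [if_neg (by omega)]; omega
        rw [hcj, hcj1]
        have hY : f (i₀ + ((2 * (a - l) + 1 : ℕ) : ZMod (Fintype.card V))) ∈ Y :=
          (par (2 * (a - l) + 1)).2 ⟨a - l, by ring⟩
        have : f (i₀ + ((0 : ℕ) : ZMod (Fintype.card V))) = u := by simp [hui]
        rw [this]
        exact hfull _ hY
      · have hv1 : (j + 1).val = j.val + 1 := by
          rw [hj1, Nat.mod_eq_of_lt (by omega)]
        have hcj1 : c (j + 1) = c j + 1 := by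
          simp only [hc]
          rw [if_neg (by omega), if_neg h0]
          omega
        rw [hcj1]
        have e1 : i₀ + ((c j + 1 : ℕ) : ZMod (Fintype.card V))
            = (i₀ + ((c j : ℕ) : ZMod (Fintype.card V))) + 1 := by push_cast; ring
        rw [e1]
        exact hf _

lemma full_in [Fintype V] {A : V → V → Prop} {X Y : Set V} {a : ℕ}
    (ha : 1 ≤ a) (hcard : Fintype.card V = 2 * a)
    (hbip : IsBipartition A X Y)
    (f : ZMod (Fintype.card V) ≃ V) (hf : ∀ i, A (f i) (f (i + 1)))
    {u : V} (hu : u ∈ X) (hfull : ∀ y ∈ Y, A y u) : Bipancyclic A a := by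
  haveI : NeZero (Fintype.card V) := ⟨by omega⟩
  set i₀ := f.symm u with hi₀
  have hui : f i₀ = u := f.apply_symm_apply u
  have par := parity_lemma hbip f hf i₀ (hui ▸ hu)
  intro l hl1 hl2
  haveI : NeZero (2 * l) := ⟨by omega⟩
  refine ⟨fun j => f (i₀ + ((j.val : ℕ) : ZMod (Fintype.card V))), ?_, ?_⟩
  · intro j1 j2 h
    have h2 : ((j1.val : ℕ) : ZMod (Fintype.card V)) = ((j2.val : ℕ) : ZMod (Fintype.card V)) :=
      add_left_cancel (f.injective h)
    have hv : j1.val = j2.val := by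
      have hv1 : j1.val < Fintype.card V := by have := ZMod.val_lt j1; omega
      have hv2 : j2.val < Fintype.card V := by have := ZMod.val_lt j2; omega
      have := congrArg ZMod.val h2
      rwa [ZMod.val_cast_of_lt hv1, ZMod.val_cast_of_lt hv2] at this
    exact ZMod.val_injective _ hv
  · intro j
    show A (f (i₀ + ((j.val : ℕ) : ZMod (Fintype.card V))))
        (f (i₀ + (((j + 1).val : ℕ) : ZMod (Fintype.card V))))
    have hjl : j.val < 2 * l := ZMod.val_lt j
    have hj1 := succ_val j
    rcases eq_or_ne j.val (2 * l - 1) with he | hne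
    · have h0 : (j + 1).val = 0 := by
        rw [hj1, he, show 2 * l - 1 + 1 = 2 * l by omega, Nat.mod_self]
      rw [h0, he]
      have hY : f (i₀ + ((2 * l - 1 : ℕ) : ZMod (Fintype.card V))) ∈ Y :=
        (par (2 * l - 1)).2 ⟨l - 1, by omega⟩
      have : f (i₀ + ((0 : ℕ) : ZMod (Fintype.card V))) = u := by simp [hui]
      rw [this]
      exact hfull _ hY
    · have hv1 : (j + 1).val = j.val + 1 := by
        rw [hj1, Nat.mod_eq_of_lt (by omega)]
      rw [hv1]
      have e1 : i₀ + ((j.val + 1 : ℕ) : ZMod (Fintype.card V))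
          = (i₀ + ((j.val : ℕ) : ZMod (Fintype.card V))) + 1 := by push_cast; ring
      rw [e1]
      exact hf _

end AuxLemmas
/-- if `D` is Hamiltonian, not bipancyclic and not a `2a`-cycle, then
`k+1 ≤ d⁻(u) ≤ a−1` and `k+1 ≤ d⁺(u) ≤ a−1` for every vertex. -/
theorem stmt_15 {V : Type*} [Fintype V] (A : V → V → Prop) (a k : ℕ) (X Y : Set V)
    (ha : 3 ≤ a) (hk1 : 1 < k) (hk2 : a < 4 * k) (hk3 : 2 * k ≤ a)
    (hcard : Fintype.card V = 2 * a)
    (hbip : IsBipartition A X Y) (hX : X.ncard = a) (hY : Y.ncard = a)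
    (hsc : StronglyConnected A)
    (hdeg : ∀ u v : V, IsDominatingPair A u v →
      (2 * a - k ≤ deg A u ∧ a + k ≤ deg A v) ∨
      (a + k ≤ deg A u ∧ 2 * a - k ≤ deg A v))
    (hham : IsHamiltonian A) (hnb : ¬ Bipancyclic A a)
    (hnc : ¬ IsDirectedCycleDigraph A) :
    ∀ u : V, (k + 1 ≤ inDeg A u ∧ inDeg A u ≤ a - 1) ∧
      (k + 1 ≤ outDeg A u ∧ outDeg A u ≤ a - 1) := by
  classical
  obtain ⟨f, hf⟩ := hham
  haveI : NeZero (Fintype.card V) := ⟨by omega⟩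
  -- Step 1: upper bounds
  have key : ∀ (S T : Set V), IsBipartition A S T → T.ncard = a →
      ∀ u ∈ S, outDeg A u ≤ a - 1 ∧ inDeg A u ≤ a - 1 := by
    intro S T hb hT u hu
    have hsubO : {v | A u v} ⊆ T := by
      intro v hv
      rcases hb.2.2 u v hv with ⟨_, h2⟩ | ⟨h1, _⟩
      · exact h2
      · exact absurd hu (fun h => Set.disjoint_left.mp hb.1 h h1)
    have hsubI : {v | A v u} ⊆ T := by
      intro v hv
      rcases hb.2.2 v u hv with ⟨_, h2⟩ | ⟨h1, _⟩
      · exact absurd hu (fun h => Set.disjoint_left.mp hb.1 h h2)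
      · exact h1
    have hO : outDeg A u ≤ a := by
      rw [← hT]; exact Set.ncard_le_ncard hsubO T.toFinite
    have hI : inDeg A u ≤ a := by
      rw [← hT]; exact Set.ncard_le_ncard hsubI T.toFinite
    constructor
    · rcases eq_or_lt_of_le hO with heq | hlt
      · exfalso
        have hset : {v | A u v} = T :=
          Set.eq_of_subset_of_ncard_le hsubO (by rw [hT, ← heq]; rfl) T.toFinite
        exact hnb (full_out (by omega) hcard hb f hf hu
          (fun y hy => by rw [← hset] at hy; exact hy))
      · omega
    · rcases eq_or_lt_of_le hI with heq | hlt
      · exfalso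
        have hset : {v | A v u} = T :=
          Set.eq_of_subset_of_ncard_le hsubI (by rw [hT, ← heq]; rfl) T.toFinite
        exact hnb (full_in (by omega) hcard hb f hf hu
          (fun y hy => by rw [← hset] at hy; exact hy))
      · omega
  have step1 : ∀ u : V, outDeg A u ≤ a - 1 ∧ inDeg A u ≤ a - 1 := by
    intro u
    have hmem : u ∈ X ∪ Y := by rw [hbip.2.1]; trivial
    rcases hmem with hu | hu
    · exact key X Y hbip hY u hu
    · exact key Y X (bip_symm hbip) hX u hu
  -- Step 2: small degree forces the digraph to be a directed cycle
  have hGood : ∀ x : V, deg A x < a + k → ∀ w, A x w → ∀ z, A z w → z = x := by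
    intro x hx w hxw z hzw
    by_contra hne
    have hdom : IsDominatingPair A x z := ⟨fun h => hne h.symm, w, hxw, hzw⟩
    rcases hdeg x z hdom with ⟨h1, _⟩ | ⟨h1, _⟩ <;> omega
  have hstep : ∀ x : V, (∀ w, A x w → ∀ z, A z w → z = x) → ∀ y, A x y →
      (∀ w, A y w → ∀ z, A z w → z = y) := by
    intro x hx y hxy
    have hin : {z | A z y} = {x} := by
      ext z
      simp only [Set.mem_setOf_eq, Set.mem_singleton_iff]
      exact ⟨fun hz => hx y hxy z hz, fun hz => hz ▸ hxy⟩
    have hiny : inDeg A y = 1 := by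
      unfold inDeg; rw [hin]; exact Set.ncard_singleton x
    apply hGood
    have hOy := (step1 y).1
    have hdy : deg A y = outDeg A y + inDeg A y := rfl
    omega
  have hcontra : ∀ x : V, deg A x < a + k → False := by
    intro x hx
    have hGn : ∀ n : ℕ, ∀ w, A (f (f.symm x + (n : ZMod (Fintype.card V)))) w →
        ∀ z, A z w → z = f (f.symm x + (n : ZMod (Fintype.card V))) := by
      intro n
      induction n with
      | zero => simpa [f.apply_symm_apply] using hGood x hx
      | succ m ih =>
        have hcast : (f.symm x + ((m + 1 : ℕ) : ZMod (Fintype.card V)))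
            = (f.symm x + (m : ZMod (Fintype.card V))) + 1 := by push_cast; ring
        rw [hcast]
        exact hstep _ ih _ (hf _)
    have hGall : ∀ j : ZMod (Fintype.card V), ∀ w, A (f j) w → ∀ z, A z w → z = f j := by
      intro j
      have e : f.symm x + (((j - f.symm x).val : ℕ) : ZMod (Fintype.card V)) = j := by
        rw [ZMod.natCast_rightInverse (j - f.symm x), add_sub_cancel]
      have h := hGn (j - f.symm x).val
      rwa [e] at h
    apply hnc
    refine ⟨f, fun u v => ⟨fun huv => ?_, ?_⟩⟩
    · have harc : A (f (f.symm v - 1)) v := by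
        have h := hf (f.symm v - 1)
        rwa [sub_add_cancel, f.apply_symm_apply] at h
      have hu : u = f (f.symm v - 1) := hGall _ v harc u huv
      exact ⟨f.symm v - 1, hu, by rw [sub_add_cancel, f.apply_symm_apply]⟩
    · rintro ⟨i, rfl, rfl⟩
      exact hf i
  intro u
  have h1 := step1 u
  have hdu : deg A u = outDeg A u + inDeg A u := rfl
  refine ⟨⟨?_, h1.2⟩, ?_, h1.1⟩
  · by_contra hlt
    exact hcontra u (by omega)
  · by_contra hlt
    exact hcontra u (by omega)
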